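/- Let G be a connected finite simple graph with vertex set V, let L ≥ 1, and let x_0, x_1, …, x_{L−1} ∈ V satisfy, for each t < L−1, either x_{t+1} = x_t or x_{t+1} adjacent to x_t in G. Set h = x_{L−1} and define f : V → ℕ by f(v) = min{t : x_t = v} if v ∈ {x_0,…,x_{L−1}}, and f(v) = dist_G(v, h) + L otherwise, where dist_G denotes graph distance. Then x_0 is a local minimum of f, and it is the unique local minimum: for every vertex v ≠ x_0 there exists a neighbor w of v with f(w) < f(v). -/

import Mathlib

/-- **The snake input has a unique local minimum at the tail.** Given a walk
`x_0, …, x_{L-1}` in a connected graph `G` (each step stalls or moves to a neighbor),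
with head `h = x_{L-1}`, define `f v` as the first hitting time of the walk at `v` if
`v` is on the walk, and as `dist(v, h) + L` otherwise. Then `x_0` is a local minimum
of `f`, and every other vertex has a neighbor of strictly smaller `f`-value. -/
theorem stmt_5 {V : Type*} [Fintype V] (G : SimpleGraph V) (hG : G.Connected)
    (L : ℕ) (hL : 1 ≤ L) (x : ℕ → V)
    (hstep : ∀ t, t + 1 < L → x (t + 1) = x t ∨ G.Adj (x t) (x (t + 1)))
    (f : V → ℕ)
    (hf1 : ∀ v : V, (∃ t < L, x t = v) → f v = sInf {t | t < L ∧ x t = v})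
    (hf2 : ∀ v : V, (¬ ∃ t < L, x t = v) → f v = G.dist v (x (L - 1)) + L) :
    (∀ w, G.Adj (x 0) w → f (x 0) ≤ f w) ∧
    (∀ v, v ≠ x 0 → ∃ w, G.Adj v w ∧ f w < f v) := by
  have hx0 : f (x 0) = 0 := by
    rw [hf1 (x 0) ⟨0, hL, rfl⟩]
    exact Nat.le_zero.mp (Nat.sInf_le ⟨hL, rfl⟩)
  constructor
  · intro w _; rw [hx0]; exact Nat.zero_le _
  · intro v hv
    by_cases hon : ∃ t < L, x t = v
    · have hfv := hf1 v hon
      set S : Set ℕ := {t | t < L ∧ x t = v} with hS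
      have hne : S.Nonempty := by obtain ⟨t, ht, hxt⟩ := hon; exact ⟨t, ht, hxt⟩
      have hmem : sInf S ∈ S := Nat.sInf_mem hne
      obtain ⟨hmL, hmx⟩ := hmem
      set m := sInf S with hm
      have hm0 : m ≠ 0 := by
        intro h0
        apply hv
        rw [← hmx, h0]
      obtain ⟨k, hk⟩ : ∃ k, m = k + 1 := ⟨m - 1, (Nat.succ_pred_eq_of_ne_zero hm0).symm⟩
      have hkL : k + 1 < L := hk ▸ hmL
      rcases hstep k hkL with heq | hadj
      · exfalso
        have : k ∈ S := ⟨Nat.lt_of_succ_lt hkL, by rw [← heq, ← hk, hmx]⟩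
        have := Nat.sInf_le this
        omega
      · refine ⟨x k, ?_, ?_⟩
        · rw [← hmx, hk]; exact hadj.symm
        · have hkon : ∃ t < L, x t = x k := ⟨k, Nat.lt_of_succ_lt hkL, rfl⟩
          rw [hf1 (x k) hkon, hfv]
          have : sInf {t | t < L ∧ x t = x k} ≤ k :=
            Nat.sInf_le ⟨Nat.lt_of_succ_lt hkL, rfl⟩
          omega
    · have hfv := hf2 v hon
      set h := x (L - 1) with hh
      have hvh : v ≠ h := by
        intro he; exact hon ⟨L - 1, by omega, he.symm⟩
      have hdpos : 0 < G.dist v h := (hG.pos_dist_of_ne hvh)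
      clear_value h
      obtain ⟨p, hp⟩ := (hG v h).exists_walk_length_eq_dist
      cases p with
      | nil => simp at hp; exact absurd rfl hvh
      | cons hadj q =>
        rename_i w
        refine ⟨w, hadj, ?_⟩
        have hdw : G.dist w h ≤ q.length := SimpleGraph.dist_le q
        have hlen : q.length + 1 = G.dist v h := by
          simpa [SimpleGraph.Walk.length_cons] using hp
        by_cases hwon : ∃ t < L, x t = w
        · have := hf1 w hwon
          have hmem := Nat.sInf_mem (by obtain ⟨t, ht, hxt⟩ := hwon; exact ⟨t, ht, hxt⟩ :
            {t | t < L ∧ x t = w}.Nonempty)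
          have : f w < L := by rw [hf1 w hwon]; exact hmem.1
          omega
        · have := hf2 w hwon
          rw [this, hfv]
          omega
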